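/- With u : ℝ/2πℤ → ℝ^{2q(t)} the normalized truncated heat kernel embedding of S¹ as above and q(t) → ∞ appropriately (e.g. q(t) ≥ t^{-1}), as t → 0⁺ one has |u'(x)|² → 1 and t·|u''(x)|² → 3/2, uniformly in x. -/

import Mathlib

open scoped Topology

open Real MeasureTheory intervalIntegral Set Filter

/-- The truncated normalized heat kernel embedding of `S¹`. -/
noncomputable def heatCurve (q : ℕ) (t x : ℝ) : EuclideanSpace ℝ (Fin q × Fin 2) :=
  WithLp.toLp 2 fun p =>
    Real.sqrt (2 / Real.pi) * (4 * Real.pi) ^ ((1 : ℝ) / 4) * t ^ ((3 : ℝ) / 4) *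
      (Real.exp (-(((p.1 : ℝ) + 1) ^ 2) * t / 2) *
        (if p.2 = (0 : Fin 2) then Real.cos (((p.1 : ℝ) + 1) * x)
          else Real.sin (((p.1 : ℝ) + 1) * x)))

noncomputable def hc1 (q : ℕ) (t x : ℝ) : EuclideanSpace ℝ (Fin q × Fin 2) :=
  WithLp.toLp 2 fun p =>
    Real.sqrt (2 / Real.pi) * (4 * Real.pi) ^ ((1 : ℝ) / 4) * t ^ ((3 : ℝ) / 4) *
      (Real.exp (-(((p.1 : ℝ) + 1) ^ 2) * t / 2) *
        (if p.2 = (0 : Fin 2) then -Real.sin (((p.1 : ℝ) + 1) * x) * (((p.1 : ℝ) + 1))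
          else Real.cos (((p.1 : ℝ) + 1) * x) * (((p.1 : ℝ) + 1))))

noncomputable def hc2 (q : ℕ) (t x : ℝ) : EuclideanSpace ℝ (Fin q × Fin 2) :=
  WithLp.toLp 2 fun p =>
    Real.sqrt (2 / Real.pi) * (4 * Real.pi) ^ ((1 : ℝ) / 4) * t ^ ((3 : ℝ) / 4) *
      (Real.exp (-(((p.1 : ℝ) + 1) ^ 2) * t / 2) *
        (if p.2 = (0 : Fin 2) then -(Real.cos (((p.1 : ℝ) + 1) * x) * (((p.1 : ℝ) + 1))) * (((p.1 : ℝ) + 1))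
          else -Real.sin (((p.1 : ℝ) + 1) * x) * (((p.1 : ℝ) + 1)) * (((p.1 : ℝ) + 1))))
theorem hasDerivAt_heatCurve (q : ℕ) (t x : ℝ) : HasDerivAt (heatCurve q t) (hc1 q t x) x := by
  have h : HasDerivAt (fun x : ℝ => (fun p : Fin q × Fin 2 =>
      Real.sqrt (2 / Real.pi) * (4 * Real.pi) ^ ((1 : ℝ) / 4) * t ^ ((3 : ℝ) / 4) *
      (Real.exp (-(((p.1 : ℝ) + 1) ^ 2) * t / 2) *
        (if p.2 = (0 : Fin 2) then Real.cos (((p.1 : ℝ) + 1) * x)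
          else Real.sin (((p.1 : ℝ) + 1) * x))))) (fun p : Fin q × Fin 2 =>
    Real.sqrt (2 / Real.pi) * (4 * Real.pi) ^ ((1 : ℝ) / 4) * t ^ ((3 : ℝ) / 4) *
      (Real.exp (-(((p.1 : ℝ) + 1) ^ 2) * t / 2) *
        (if p.2 = (0 : Fin 2) then -Real.sin (((p.1 : ℝ) + 1) * x) * (((p.1 : ℝ) + 1))
          else Real.cos (((p.1 : ℝ) + 1) * x) * (((p.1 : ℝ) + 1))))) x := by
    rw [hasDerivAt_pi]
    intro p
    obtain ⟨k, j⟩ := p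
    have hcos : HasDerivAt (fun x : ℝ => Real.cos (((k : ℝ) + 1) * x))
        (-Real.sin (((k : ℝ) + 1) * x) * ((k : ℝ) + 1)) x := by
      simpa using (((hasDerivAt_id x).const_mul (((k : ℝ) + 1))).cos)
    have hsin : HasDerivAt (fun x : ℝ => Real.sin (((k : ℝ) + 1) * x))
        (Real.cos (((k : ℝ) + 1) * x) * ((k : ℝ) + 1)) x := by
      simpa using (((hasDerivAt_id x).const_mul (((k : ℝ) + 1))).sin)
    fin_cases j
    · simpa only [Fin.zero_eta, if_pos rfl, if_true] using ((hcos.const_mul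
        (Real.exp (-(((k : ℝ) + 1) ^ 2) * t / 2))).const_mul
        (Real.sqrt (2 / Real.pi) * (4 * Real.pi) ^ ((1 : ℝ) / 4) * t ^ ((3 : ℝ) / 4)))
    · have hne : ((1 : Fin 2) = (0 : Fin 2)) = False := by simp
      simpa only [Fin.mk_one, hne, if_false] using ((hsin.const_mul
        (Real.exp (-(((k : ℝ) + 1) ^ 2) * t / 2))).const_mul
        (Real.sqrt (2 / Real.pi) * (4 * Real.pi) ^ ((1 : ℝ) / 4) * t ^ ((3 : ℝ) / 4)))
  exact ((EuclideanSpace.equiv (Fin q × Fin 2) ℝ).symm.hasFDerivAt.comp_hasDerivAt x h : _)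

theorem hasDerivAt_hc1 (q : ℕ) (t x : ℝ) : HasDerivAt (hc1 q t) (hc2 q t x) x := by
  have h : HasDerivAt (fun x : ℝ => (fun p : Fin q × Fin 2 =>
      Real.sqrt (2 / Real.pi) * (4 * Real.pi) ^ ((1 : ℝ) / 4) * t ^ ((3 : ℝ) / 4) *
      (Real.exp (-(((p.1 : ℝ) + 1) ^ 2) * t / 2) *
        (if p.2 = (0 : Fin 2) then -Real.sin (((p.1 : ℝ) + 1) * x) * (((p.1 : ℝ) + 1))
          else Real.cos (((p.1 : ℝ) + 1) * x) * (((p.1 : ℝ) + 1)))))) (fun p : Fin q × Fin 2 =>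
    Real.sqrt (2 / Real.pi) * (4 * Real.pi) ^ ((1 : ℝ) / 4) * t ^ ((3 : ℝ) / 4) *
      (Real.exp (-(((p.1 : ℝ) + 1) ^ 2) * t / 2) *
        (if p.2 = (0 : Fin 2) then -(Real.cos (((p.1 : ℝ) + 1) * x) * (((p.1 : ℝ) + 1))) * (((p.1 : ℝ) + 1))
          else -Real.sin (((p.1 : ℝ) + 1) * x) * (((p.1 : ℝ) + 1)) * (((p.1 : ℝ) + 1))))) x := by
    rw [hasDerivAt_pi]
    intro p
    obtain ⟨k, j⟩ := p
    have hcos : HasDerivAt (fun x : ℝ => Real.cos (((k : ℝ) + 1) * x))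
        (-Real.sin (((k : ℝ) + 1) * x) * ((k : ℝ) + 1)) x := by
      simpa using (((hasDerivAt_id x).const_mul (((k : ℝ) + 1))).cos)
    have hsin : HasDerivAt (fun x : ℝ => Real.sin (((k : ℝ) + 1) * x))
        (Real.cos (((k : ℝ) + 1) * x) * ((k : ℝ) + 1)) x := by
      simpa using (((hasDerivAt_id x).const_mul (((k : ℝ) + 1))).sin)
    fin_cases j
    · simpa only [Fin.zero_eta, if_pos rfl, if_true, Pi.neg_apply] using ((((hsin.neg).mul_const ((k : ℝ) + 1)).const_mul
        (Real.exp (-(((k : ℝ) + 1) ^ 2) * t / 2))).const_mul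
        (Real.sqrt (2 / Real.pi) * (4 * Real.pi) ^ ((1 : ℝ) / 4) * t ^ ((3 : ℝ) / 4)))
    · have hne : ((1 : Fin 2) = (0 : Fin 2)) = False := by simp
      simpa only [Fin.mk_one, hne, if_false] using (((hcos.mul_const ((k : ℝ) + 1)).const_mul
        (Real.exp (-(((k : ℝ) + 1) ^ 2) * t / 2))).const_mul
        (Real.sqrt (2 / Real.pi) * (4 * Real.pi) ^ ((1 : ℝ) / 4) * t ^ ((3 : ℝ) / 4)))
  exact ((EuclideanSpace.equiv (Fin q × Fin 2) ℝ).symm.hasFDerivAt.comp_hasDerivAt x h : _)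
theorem norm_hc1_sq (q : ℕ) (t x : ℝ) :
    ‖hc1 q t x‖ ^ 2 =
      (Real.sqrt (2 / Real.pi) * (4 * Real.pi) ^ ((1 : ℝ) / 4) * t ^ ((3 : ℝ) / 4)) ^ 2 *
        ∑ k ∈ Finset.range q, ((k : ℝ) + 1) ^ 2 * Real.exp (-(((k : ℝ) + 1) ^ 2) * t) := by
  rw [EuclideanSpace.norm_eq, Real.sq_sqrt (by positivity), Fintype.sum_prod_type]
  rw [Finset.mul_sum, ← Fin.sum_univ_eq_sum_range]
  refine Finset.sum_congr rfl fun k _ => ?_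
  rw [Fin.sum_univ_two]
  simp only [hc1, if_pos rfl, if_neg (by decide : ¬ (1 : Fin 2) = (0 : Fin 2)), ite_true,
    Real.norm_eq_abs, sq_abs]
  have h := Real.sin_sq_add_cos_sq (((k : ℝ) + 1) * x)
  have he : Real.exp (-(((k : ℝ) + 1) ^ 2) * t / 2) ^ 2
      = Real.exp (-(((k : ℝ) + 1) ^ 2) * t) := by
    rw [sq, ← Real.exp_add]; ring_nf
  rw [← he]
  linear_combination ((Real.sqrt (2 / Real.pi) * (4 * Real.pi) ^ ((1 : ℝ) / 4) * t ^ ((3 : ℝ) / 4)) *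
    Real.exp (-(((k : ℝ) + 1) ^ 2) * t / 2) * ((k : ℝ) + 1)) ^ 2 * h

/-- one-interval estimate -/
theorem step_est (g g' : ℝ → ℝ) (hd : ∀ y, HasDerivAt g (g' y) y)
    (hc : Continuous g) (hc' : Continuous g') {a b : ℝ} (hab : a ≤ b) :
    |(b - a) * g b - ∫ y in a..b, g y| ≤ (b - a) * ∫ y in a..b, |g' y| := by
  have h1 : (b - a) * g b - ∫ y in a..b, g y = ∫ y in a..b, (g b - g y) := by
    rw [intervalIntegral.integral_sub intervalIntegrable_const (hc.intervalIntegrable _ _),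
      intervalIntegral.integral_const, smul_eq_mul]
  rw [h1]
  have key : ∀ y ∈ Set.uIcc a b, |g b - g y| ≤ ∫ z in a..b, |g' z| := by
    intro y hy
    rw [Set.uIcc_of_le hab] at hy
    have ftc : ∫ z in y..b, g' z = g b - g y :=
      intervalIntegral.integral_eq_sub_of_hasDerivAt (fun z _ => hd z)
        (hc'.intervalIntegrable _ _)
    rw [← ftc]
    calc |∫ z in y..b, g' z| ≤ ∫ z in y..b, |g' z| :=
          intervalIntegral.abs_integral_le_integral_abs hy.2
      _ ≤ ∫ z in a..b, |g' z| :=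
          intervalIntegral.integral_mono_interval hy.1 hy.2 le_rfl
            (Filter.Eventually.of_forall fun z => abs_nonneg _)
            (hc'.abs.intervalIntegrable _ _)
  have h2 := intervalIntegral.norm_integral_le_of_norm_le_const
    (C := ∫ z in a..b, |g' z|)
    (f := fun y => g b - g y) (a := a) (b := b)
    (fun y hy => by
      simpa using key y (Set.uIoc_subset_uIcc hy))
  rw [Real.norm_eq_abs] at h2
  calc |∫ y in a..b, (g b - g y)| ≤ (∫ z in a..b, |g' z|) * |b - a| := h2
    _ = (b - a) * ∫ z in a..b, |g' z| := by rw [abs_of_nonneg (by linarith)]; ring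

theorem riemann_sum_tendsto (g g' : ℝ → ℝ) (hd : ∀ y, HasDerivAt g (g' y) y)
    (hc : Continuous g) (hc' : Continuous g')
    (hgi : IntegrableOn g (Set.Ioi 0)) (hg'i : IntegrableOn g' (Set.Ioi 0))
    (q : ℝ → ℕ) (hq : ∀ t : ℝ, 0 < t → t⁻¹ ≤ (q t : ℝ)) :
    Tendsto (fun t : ℝ => Real.sqrt t * ∑ k ∈ Finset.range (q t), g (((k : ℝ) + 1) * Real.sqrt t))
      (𝓝[>] 0) (𝓝 (∫ y in Set.Ioi 0, g y)) := by
  set B : ℝ := ∫ y in Set.Ioi (0 : ℝ), |g' y| with hB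
  -- main estimate
  have est : ∀ t : ℝ, 0 < t →
      |Real.sqrt t * ∑ k ∈ Finset.range (q t), g (((k : ℝ) + 1) * Real.sqrt t)
        - ∫ y in (0 : ℝ)..((q t : ℝ) * Real.sqrt t), g y| ≤ Real.sqrt t * B := by
    intro t ht
    set s := Real.sqrt t with hs
    have hs0 : 0 < s := Real.sqrt_pos.mpr ht
    set n := q t with hn
    have hadj : ∀ (f : ℝ → ℝ), Continuous f →
        (∑ k ∈ Finset.range n, ∫ y in ((k : ℝ) * s)..(((k : ℝ) + 1) * s), f y)
          = ∫ y in (0 : ℝ)..((n : ℝ) * s), f y := by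
      intro f hf
      have := intervalIntegral.sum_integral_adjacent_intervals
        (μ := MeasureTheory.volume) (a := fun k : ℕ => (k : ℝ) * s) (n := n)
        (fun k _ => hf.intervalIntegrable _ _)
      simpa [Nat.cast_succ] using this
    have hsum : |∑ k ∈ Finset.range n,
        (s * g (((k : ℝ) + 1) * s) - ∫ y in ((k : ℝ) * s)..(((k : ℝ) + 1) * s), g y)|
        ≤ s * ∫ y in (0 : ℝ)..((n : ℝ) * s), |g' y| := by
      calc |∑ k ∈ Finset.range n,
          (s * g (((k : ℝ) + 1) * s) - ∫ y in ((k : ℝ) * s)..(((k : ℝ) + 1) * s), g y)|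
          ≤ ∑ k ∈ Finset.range n,
            |s * g (((k : ℝ) + 1) * s) - ∫ y in ((k : ℝ) * s)..(((k : ℝ) + 1) * s), g y| :=
            Finset.abs_sum_le_sum_abs _ _
        _ ≤ ∑ k ∈ Finset.range n,
            s * ∫ y in ((k : ℝ) * s)..(((k : ℝ) + 1) * s), |g' y| := by
            refine Finset.sum_le_sum fun k _ => ?_
            have hab : (k : ℝ) * s ≤ ((k : ℝ) + 1) * s := by nlinarith
            have := step_est g g' hd hc hc' hab
            rw [show ((k : ℝ) + 1) * s - (k : ℝ) * s = s by ring] at this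
            exact this
        _ = s * ∫ y in (0 : ℝ)..((n : ℝ) * s), |g' y| := by
            rw [← Finset.mul_sum, hadj _ hc'.abs]
    have hint : ∫ y in (0 : ℝ)..((n : ℝ) * s), |g' y| ≤ B := by
      rw [intervalIntegral.integral_of_le (by positivity)]
      exact setIntegral_mono_set hg'i.abs
        (Filter.Eventually.of_forall fun z => abs_nonneg _)
        Set.Ioc_subset_Ioi_self.eventuallyLE
    calc |s * ∑ k ∈ Finset.range n, g (((k : ℝ) + 1) * s) - ∫ y in (0 : ℝ)..((n : ℝ) * s), g y|
        = |∑ k ∈ Finset.range n,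
            (s * g (((k : ℝ) + 1) * s) - ∫ y in ((k : ℝ) * s)..(((k : ℝ) + 1) * s), g y)| := by
          rw [Finset.sum_sub_distrib, ← Finset.mul_sum, hadj _ hc]
      _ ≤ s * ∫ y in (0 : ℝ)..((n : ℝ) * s), |g' y| := hsum
      _ ≤ s * B := by nlinarith
  -- sqrt tendsto 0 within
  have hsqrt0 : Tendsto (fun t : ℝ => Real.sqrt t) (𝓝[>] 0) (𝓝[>] 0) := by
    rw [tendsto_nhdsWithin_iff]
    constructor
    · have := (Real.continuous_sqrt.tendsto 0)
      simpa using this.mono_left nhdsWithin_le_nhds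
    · filter_upwards [self_mem_nhdsWithin] with t ht
      exact Real.sqrt_pos.mpr ht
  have hinf : Tendsto (fun t : ℝ => (q t : ℝ) * Real.sqrt t) (𝓝[>] 0) atTop := by
    refine tendsto_atTop_mono' _ ?_ (tendsto_inv_nhdsGT_zero.comp hsqrt0)
    filter_upwards [self_mem_nhdsWithin] with t ht
    have hs0 : 0 < Real.sqrt t := Real.sqrt_pos.mpr ht
    have hmul : Real.sqrt t * Real.sqrt t = t := Real.mul_self_sqrt ht.le
    have e1 : (Real.sqrt t)⁻¹ * Real.sqrt t = 1 := inv_mul_cancel₀ (ne_of_gt hs0)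
    have e2 : t⁻¹ * t = 1 := inv_mul_cancel₀ (ne_of_gt (mem_Ioi.mp ht))
    show (Real.sqrt t)⁻¹ ≤ (q t : ℝ) * Real.sqrt t
    nlinarith [hq t ht, hmul, hs0, e1, e2, mem_Ioi.mp ht]
  have hI : Tendsto (fun t : ℝ => ∫ y in (0 : ℝ)..((q t : ℝ) * Real.sqrt t), g y) (𝓝[>] 0)
      (𝓝 (∫ y in Set.Ioi 0, g y)) :=
    MeasureTheory.intervalIntegral_tendsto_integral_Ioi 0 hgi hinf
  have h0 : Tendsto (fun t : ℝ =>
      Real.sqrt t * ∑ k ∈ Finset.range (q t), g (((k : ℝ) + 1) * Real.sqrt t)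
        - ∫ y in (0 : ℝ)..((q t : ℝ) * Real.sqrt t), g y) (𝓝[>] 0) (𝓝 0) := by
    apply squeeze_zero_norm' (a := fun t => Real.sqrt t * B)
    · filter_upwards [self_mem_nhdsWithin] with t ht
      simpa using est t ht
    · have : Tendsto (fun t : ℝ => Real.sqrt t * B) (𝓝[>] 0) (𝓝 (0 * B)) :=
        ((hsqrt0.mono_right nhdsWithin_le_nhds).mul_const B)
      simpa using this
  have := h0.add hI
  simpa using this
noncomputable def g2fun : ℝ → ℝ := fun y => y ^ 2 * Real.exp (-y ^ 2)
noncomputable def g2fun' : ℝ → ℝ := fun y => (2 * y - 2 * y ^ 3) * Real.exp (-y ^ 2)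
noncomputable def g4fun : ℝ → ℝ := fun y => y ^ 4 * Real.exp (-y ^ 2)
noncomputable def g4fun' : ℝ → ℝ := fun y => (4 * y ^ 3 - 2 * y ^ 5) * Real.exp (-y ^ 2)

theorem hasDerivAt_g2 (y : ℝ) : HasDerivAt g2fun (g2fun' y) y := by
  have h1 : HasDerivAt (fun y : ℝ => y ^ 2) (2 * y) y := by simpa using hasDerivAt_pow 2 y
  have h2 : HasDerivAt (fun y : ℝ => Real.exp (-y ^ 2)) (Real.exp (-y ^ 2) * (-(2 * y))) y := by
    simpa using (((hasDerivAt_pow 2 y).neg).exp)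
  have := h1.mul h2
  exact this.congr_deriv (by unfold g2fun'; ring)

theorem hasDerivAt_g4 (y : ℝ) : HasDerivAt g4fun (g4fun' y) y := by
  have h1 : HasDerivAt (fun y : ℝ => y ^ 4) (4 * y ^ 3) y := by simpa using hasDerivAt_pow 4 y
  have h2 : HasDerivAt (fun y : ℝ => Real.exp (-y ^ 2)) (Real.exp (-y ^ 2) * (-(2 * y))) y := by
    simpa using (((hasDerivAt_pow 2 y).neg).exp)
  have := h1.mul h2
  exact this.congr_deriv (by unfold g4fun'; ring)

theorem intOn_pow (n : ℕ) :
    IntegrableOn (fun y : ℝ => y ^ n * Real.exp (-y ^ 2)) (Set.Ioi 0) := by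
  have h := integrableOn_rpow_mul_exp_neg_mul_sq (b := (1 : ℝ)) one_pos (s := (n : ℝ))
    (by exact_mod_cast neg_one_lt_zero.trans_le (Nat.cast_nonneg n))
  refine h.congr_fun (fun x hx => ?_) measurableSet_Ioi
  dsimp only
  rw [Real.rpow_natCast, neg_one_mul]

theorem int_g2 : ∫ y in Set.Ioi (0 : ℝ), g2fun y = Real.sqrt Real.pi / 4 := by
  have h := integral_rpow_mul_exp_neg_rpow (p := 2) (q := 2) two_pos (by norm_num)
  have he : EqOn (fun x : ℝ => x ^ (2 : ℝ) * Real.exp (-x ^ (2 : ℝ))) g2fun (Set.Ioi 0) := by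
    intro x _
    simp only [g2fun]
    rw [show (2 : ℝ) = ((2 : ℕ) : ℝ) by norm_num, Real.rpow_natCast]
  rw [← setIntegral_congr_fun measurableSet_Ioi he, h,
    show ((2 : ℝ) + 1) / 2 = 1 / 2 + 1 by norm_num,
    Real.Gamma_add_one (by norm_num), Real.Gamma_one_half_eq]
  ring

theorem int_g4 : ∫ y in Set.Ioi (0 : ℝ), g4fun y = 3 * Real.sqrt Real.pi / 8 := by
  have h := integral_rpow_mul_exp_neg_rpow (p := 2) (q := 4) two_pos (by norm_num)
  have he : EqOn (fun x : ℝ => x ^ (4 : ℝ) * Real.exp (-x ^ (2 : ℝ))) g4fun (Set.Ioi 0) := by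
    intro x _
    simp only [g4fun]
    rw [show (4 : ℝ) = ((4 : ℕ) : ℝ) by norm_num, Real.rpow_natCast,
      show (2 : ℝ) = ((2 : ℕ) : ℝ) by norm_num, Real.rpow_natCast]
  rw [← setIntegral_congr_fun measurableSet_Ioi he, h,
    show ((4 : ℝ) + 1) / 2 = (1 / 2 + 1) + 1 by norm_num,
    Real.Gamma_add_one (by norm_num), Real.Gamma_add_one (by norm_num),
    Real.Gamma_one_half_eq]
  ring

theorem intOn_g2 : IntegrableOn g2fun (Set.Ioi 0) := intOn_pow 2
theorem intOn_g4 : IntegrableOn g4fun (Set.Ioi 0) := intOn_pow 4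

theorem intOn_g2' : IntegrableOn g2fun' (Set.Ioi 0) := by
  have h : IntegrableOn
      (fun x : ℝ => 2 * (x ^ 1 * Real.exp (-x ^ 2)) - 2 * (x ^ 3 * Real.exp (-x ^ 2)))
      (Set.Ioi 0) := ((intOn_pow 1).const_mul 2).sub ((intOn_pow 3).const_mul 2)
  refine h.congr_fun (fun x _ => ?_) measurableSet_Ioi
  simp only [g2fun']
  ring

theorem intOn_g4' : IntegrableOn g4fun' (Set.Ioi 0) := by
  have h : IntegrableOn
      (fun x : ℝ => 4 * (x ^ 3 * Real.exp (-x ^ 2)) - 2 * (x ^ 5 * Real.exp (-x ^ 2)))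
      (Set.Ioi 0) := ((intOn_pow 3).const_mul 4).sub ((intOn_pow 5).const_mul 2)
  refine h.congr_fun (fun x _ => ?_) measurableSet_Ioi
  simp only [g4fun']
  ring

theorem cont_g2 : Continuous g2fun := by unfold g2fun; fun_prop
theorem cont_g2' : Continuous g2fun' := by unfold g2fun'; fun_prop
theorem cont_g4 : Continuous g4fun := by unfold g4fun; fun_prop
theorem cont_g4' : Continuous g4fun' := by unfold g4fun'; fun_prop

theorem C2_eq {t : ℝ} (ht : 0 < t) :
    (Real.sqrt (2 / Real.pi) * (4 * Real.pi) ^ ((1 : ℝ) / 4) * t ^ ((3 : ℝ) / 4)) ^ 2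
      = (4 / Real.sqrt Real.pi) * t ^ ((3 : ℝ) / 2) := by
  have h4 : ((4 * Real.pi) ^ ((1 : ℝ) / 4)) ^ (2 : ℕ) = (4 * Real.pi) ^ ((1 : ℝ) / 2) := by
    rw [← Real.rpow_natCast ((4 * Real.pi) ^ ((1 : ℝ) / 4)) 2,
      ← Real.rpow_mul (by positivity)]
    norm_num
  have h3 : (t ^ ((3 : ℝ) / 4)) ^ (2 : ℕ) = t ^ ((3 : ℝ) / 2) := by
    rw [← Real.rpow_natCast (t ^ ((3 : ℝ) / 4)) 2, ← Real.rpow_mul ht.le]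
    norm_num
  have h5 : (4 * Real.pi) ^ ((1 : ℝ) / 2) = 2 * Real.sqrt Real.pi := by
    rw [← Real.sqrt_eq_rpow, show (4 : ℝ) * Real.pi = 2 ^ 2 * Real.pi by norm_num,
      Real.sqrt_mul (by positivity), Real.sqrt_sq (by norm_num)]
  rw [mul_pow, mul_pow, Real.sq_sqrt (by positivity), h4, h3, h5]
  have hπ : Real.sqrt Real.pi * Real.sqrt Real.pi = Real.pi := Real.mul_self_sqrt Real.pi_pos.le
  have hs : Real.sqrt Real.pi ≠ 0 := by positivity
  have hp : Real.pi ≠ 0 := Real.pi_ne_zero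
  field_simp
  linear_combination 4 * hπ

theorem norm_hc2_sq (q : ℕ) (t x : ℝ) :
    ‖hc2 q t x‖ ^ 2 =
      (Real.sqrt (2 / Real.pi) * (4 * Real.pi) ^ ((1 : ℝ) / 4) * t ^ ((3 : ℝ) / 4)) ^ 2 *
        ∑ k ∈ Finset.range q, ((k : ℝ) + 1) ^ 4 * Real.exp (-(((k : ℝ) + 1) ^ 2) * t) := by
  rw [EuclideanSpace.norm_eq, Real.sq_sqrt (by positivity), Fintype.sum_prod_type]
  rw [Finset.mul_sum, ← Fin.sum_univ_eq_sum_range]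
  refine Finset.sum_congr rfl fun k _ => ?_
  rw [Fin.sum_univ_two]
  simp only [hc2, if_pos rfl, if_neg (by decide : ¬ (1 : Fin 2) = (0 : Fin 2)), ite_true,
    Real.norm_eq_abs, sq_abs]
  have h := Real.sin_sq_add_cos_sq (((k : ℝ) + 1) * x)
  have he : Real.exp (-(((k : ℝ) + 1) ^ 2) * t / 2) ^ 2
      = Real.exp (-(((k : ℝ) + 1) ^ 2) * t) := by
    rw [sq, ← Real.exp_add]; ring_nf
  rw [← he]
  linear_combination ((Real.sqrt (2 / Real.pi) * (4 * Real.pi) ^ ((1 : ℝ) / 4) * t ^ ((3 : ℝ) / 4)) *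
    Real.exp (-(((k : ℝ) + 1) ^ 2) * t / 2) * ((k : ℝ) + 1) ^ 2) ^ 2 * h

theorem sqrt32 {t : ℝ} (ht : 0 < t) : t ^ ((3 : ℝ) / 2) = t * Real.sqrt t := by
  rw [show (3 : ℝ) / 2 = 1 + 1 / 2 by norm_num, Real.rpow_add ht, Real.rpow_one,
    ← Real.sqrt_eq_rpow]

theorem eq1 (q : ℕ) {t : ℝ} (ht : 0 < t) (x : ℝ) :
    ‖hc1 q t x‖ ^ 2 = (4 / Real.sqrt Real.pi) *
      (Real.sqrt t * ∑ k ∈ Finset.range q, g2fun (((k : ℝ) + 1) * Real.sqrt t)) := by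
  rw [norm_hc1_sq, C2_eq ht, sqrt32 ht, Finset.mul_sum, Finset.mul_sum, Finset.mul_sum]
  refine Finset.sum_congr rfl fun k _ => ?_
  simp only [g2fun]
  rw [mul_pow, Real.sq_sqrt ht.le, neg_mul]
  ring

theorem eq2 (q : ℕ) {t : ℝ} (ht : 0 < t) (x : ℝ) :
    t * ‖hc2 q t x‖ ^ 2 = (4 / Real.sqrt Real.pi) *
      (Real.sqrt t * ∑ k ∈ Finset.range q, g4fun (((k : ℝ) + 1) * Real.sqrt t)) := by
  rw [norm_hc2_sq, C2_eq ht, sqrt32 ht, Finset.mul_sum, Finset.mul_sum, Finset.mul_sum,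
    Finset.mul_sum]
  refine Finset.sum_congr rfl fun k _ => ?_
  simp only [g4fun]
  have h2 : (((k : ℝ) + 1) * Real.sqrt t) ^ 2 = ((k : ℝ) + 1) ^ 2 * t := by
    rw [mul_pow, Real.sq_sqrt ht.le]
  have h4 : (((k : ℝ) + 1) * Real.sqrt t) ^ 4 = ((k : ℝ) + 1) ^ 4 * t ^ 2 := by
    rw [show (((k : ℝ) + 1) * Real.sqrt t) ^ 4 = ((((k : ℝ) + 1) * Real.sqrt t) ^ 2) ^ 2 by ring,
      h2]
    ring
  rw [h2, h4, neg_mul]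
  ring

theorem uniform_of_eventually_const {F : ℝ → ℝ → ℝ} {G : ℝ → ℝ} {c : ℝ}
    (h : ∀ᶠ t in 𝓝[>] (0 : ℝ), ∀ x, F t x = G t) (hG : Tendsto G (𝓝[>] (0 : ℝ)) (𝓝 c)) :
    TendstoUniformly F (fun _ => c) (𝓝[>] (0 : ℝ)) := by
  rw [Metric.tendstoUniformly_iff]
  intro ε hε
  filter_upwards [h, hG (Metric.ball_mem_nhds c hε)] with t ht hball x
  rw [ht x]
  simpa [dist_comm] using hball

/-- As `t → 0⁺` with truncation `q(t) ≥ t⁻¹`, one has `|u'(x)|² → 1` and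
`t |u''(x)|² → 3/2`, uniformly in `x`. -/
theorem heatCurve_asymptotics
    (q : ℝ → ℕ) (hq : ∀ t : ℝ, 0 < t → t⁻¹ ≤ (q t : ℝ)) :
    TendstoUniformly
      (fun t : ℝ => fun x : ℝ => ‖deriv (heatCurve (q t) t) x‖ ^ 2)
      (fun _ => 1) (𝓝[>] (0 : ℝ)) ∧
    TendstoUniformly
      (fun t : ℝ => fun x : ℝ => t * ‖deriv (deriv (heatCurve (q t) t)) x‖ ^ 2)
      (fun _ => 3 / 2) (𝓝[>] (0 : ℝ)) := by
  have hπ : Real.sqrt Real.pi ≠ 0 := by positivity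
  have hderiv : ∀ t : ℝ, deriv (heatCurve (q t) t) = hc1 (q t) t :=
    fun t => funext fun x => (hasDerivAt_heatCurve (q t) t x).deriv
  have hderiv2 : ∀ t : ℝ, deriv (deriv (heatCurve (q t) t)) = hc2 (q t) t := by
    intro t
    rw [hderiv t]
    exact funext fun x => (hasDerivAt_hc1 (q t) t x).deriv
  constructor
  · refine uniform_of_eventually_const
      (G := fun t => (4 / Real.sqrt Real.pi) *
        (Real.sqrt t * ∑ k ∈ Finset.range (q t), g2fun (((k : ℝ) + 1) * Real.sqrt t))) ?_ ?_
    · filter_upwards [self_mem_nhdsWithin] with t ht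
      intro x
      rw [hderiv t]
      exact eq1 (q t) ht x
    · have h := (riemann_sum_tendsto g2fun g2fun' hasDerivAt_g2 cont_g2 cont_g2'
        intOn_g2 intOn_g2' q hq).const_mul (4 / Real.sqrt Real.pi)
      rw [int_g2] at h
      have : (4 / Real.sqrt Real.pi) * (Real.sqrt Real.pi / 4) = 1 := by
        calc (4 / Real.sqrt Real.pi) * (Real.sqrt Real.pi / 4)
            = (Real.sqrt Real.pi / Real.sqrt Real.pi) * 1 := by ring
          _ = 1 := by rw [div_self hπ, one_mul]
      rwa [this] at h
  · refine uniform_of_eventually_const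
      (G := fun t => (4 / Real.sqrt Real.pi) *
        (Real.sqrt t * ∑ k ∈ Finset.range (q t), g4fun (((k : ℝ) + 1) * Real.sqrt t))) ?_ ?_
    · filter_upwards [self_mem_nhdsWithin] with t ht
      intro x
      rw [hderiv2 t]
      exact eq2 (q t) ht x
    · have h := (riemann_sum_tendsto g4fun g4fun' hasDerivAt_g4 cont_g4 cont_g4'
        intOn_g4 intOn_g4' q hq).const_mul (4 / Real.sqrt Real.pi)
      rw [int_g4] at h
      have : (4 / Real.sqrt Real.pi) * (3 * Real.sqrt Real.pi / 8) = 3 / 2 := by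
        calc (4 / Real.sqrt Real.pi) * (3 * Real.sqrt Real.pi / 8)
            = (Real.sqrt Real.pi / Real.sqrt Real.pi) * (3 / 2) := by ring
          _ = 3 / 2 := by rw [div_self hπ, one_mul]
      rwa [this] at h
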